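/- The largest eigenvalue of the normalized Laplacian is a nonincreasing function of the self-loop weight β: if 0 < β₁ ≤ β₂, then λ_max(Λ(β₂)) ≤ λ_max(Λ(β₁)), where Λ(β) denotes the normalized Laplacian built with self-loop weight β (the points x_1, …, x_n and the exponent α being held fixed). -/

import Mathlib

open Matrix Finset

/-- Rayleigh quotient bound: for a real symmetric matrix, if `L` bounds all eigenvalues
from above, then `w ⬝ᵥ (A *ᵥ w) ≤ L * (w ⬝ᵥ w)`. -/
lemma rayleigh_dotProduct_le {m : Type*} [Fintype m] [DecidableEq m]
    {A : Matrix m m ℝ} (hA : A.IsHermitian) {L : ℝ}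
    (hL : ∀ i, hA.eigenvalues i ≤ L) (w : m → ℝ) :
    w ⬝ᵥ (A *ᵥ w) ≤ L * (w ⬝ᵥ w) := by
  set U : Matrix m m ℝ := (hA.eigenvectorUnitary : Matrix m m ℝ) with hU
  have hst : star U = Uᵀ := by
    rw [Matrix.star_eq_conjTranspose, Matrix.conjTranspose_eq_transpose_of_trivial]
  set y : m → ℝ := Uᵀ *ᵥ w with hy
  have hswap : ∀ z : m → ℝ, w ⬝ᵥ (U *ᵥ z) = y ⬝ᵥ z := by
    intro z
    rw [Matrix.dotProduct_mulVec, hy, Matrix.mulVec_transpose]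
  have hyy : y ⬝ᵥ y = w ⬝ᵥ w := by
    rw [hy]
    nth_rewrite 1 [Matrix.mulVec_transpose]
    rw [← Matrix.dotProduct_mulVec, Matrix.mulVec_mulVec, ← hst,
      (Matrix.mem_unitaryGroup_iff).mp hA.eigenvectorUnitary.2, Matrix.one_mulVec]
  have hAw : w ⬝ᵥ (A *ᵥ w) = ∑ i, hA.eigenvalues i * (y i * y i) := by
    nth_rewrite 1 [hA.spectral_theorem]
    rw [Unitary.conjStarAlgAut_apply]
    rw [← Matrix.mulVec_mulVec, ← Matrix.mulVec_mulVec, hswap, hst]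
    simp only [dotProduct]
    refine Finset.sum_congr rfl fun i _ => ?_
    rw [Matrix.mulVec_diagonal]
    simp [mul_comm, mul_left_comm]
    exact Or.inl (Or.inl rfl)
  rw [hAw, ← hyy, dotProduct, Finset.mul_sum]
  refine Finset.sum_le_sum fun i _ => ?_
  exact mul_le_mul_of_nonneg_right (hL i) (mul_self_nonneg _)

/-- The largest eigenvalue of the normalized Laplacian is a nonincreasing
function of the self-loop weight `β`: if `0 < β₁ ≤ β₂` then
`λ_max (Λ β₂) ≤ λ_max (Λ β₁)`. The largest eigenvalues are characterized via `IsGreatest`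
over the set of eigenvalues (real eigenvalues with real eigenvectors). -/
theorem normalized_laplacian_top_eigenvalue_antitone_in_beta
    {n : ℕ} (hn : 2 ≤ n)
    (x : Fin n → EuclideanSpace ℝ (Fin 2)) (hx : Function.Injective x)
    (α : ℝ) (hα : α < 0)
    (β₁ β₂ : ℝ) (hβ₁ : 0 < β₁) (hβ₁₂ : β₁ ≤ β₂)
    (ω₁ ω₂ : Fin n → Fin n → ℝ)
    (hω₁ : ∀ i j, i ≠ j → ω₁ i j = ‖x i - x j‖ ^ α)
    (hω₁diag : ∀ i, ω₁ i i = β₁)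
    (hω₂ : ∀ i j, i ≠ j → ω₂ i j = ‖x i - x j‖ ^ α)
    (hω₂diag : ∀ i, ω₂ i i = β₂)
    (d₁ d₂ : Fin n → ℝ)
    (hd₁ : ∀ i, d₁ i = ∑ p, ω₁ i p) (hd₂ : ∀ i, d₂ i = ∑ p, ω₂ i p)
    (Λ₁ Λ₂ : Matrix (Fin n) (Fin n) ℝ)
    (hΛ₁ : Λ₁ = 1 - (Matrix.diagonal fun i => (Real.sqrt (d₁ i))⁻¹) * (Matrix.of ω₁) *
        (Matrix.diagonal fun i => (Real.sqrt (d₁ i))⁻¹))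
    (hΛ₂ : Λ₂ = 1 - (Matrix.diagonal fun i => (Real.sqrt (d₂ i))⁻¹) * (Matrix.of ω₂) *
        (Matrix.diagonal fun i => (Real.sqrt (d₂ i))⁻¹))
    (lmax₁ lmax₂ : ℝ)
    (hlmax₁ : IsGreatest {σ : ℝ | ∃ v : Fin n → ℝ, v ≠ 0 ∧ Λ₁.mulVec v = σ • v} lmax₁)
    (hlmax₂ : IsGreatest {σ : ℝ | ∃ v : Fin n → ℝ, v ≠ 0 ∧ Λ₂.mulVec v = σ • v} lmax₂) :
    lmax₂ ≤ lmax₁ := by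
  have hne : Nonempty (Fin n) := ⟨⟨0, by omega⟩⟩
  have hrpos : ∀ i j : Fin n, i ≠ j → (0:ℝ) < ‖x i - x j‖ ^ α := by
    intro i j hij
    refine Real.rpow_pos_of_pos ?_ α
    rw [norm_pos_iff]
    exact sub_ne_zero.mpr fun h => hij (hx h)
  have hω₁pos : ∀ i j, 0 < ω₁ i j := by
    intro i j
    rcases eq_or_ne i j with rfl | h
    · rw [hω₁diag]; exact hβ₁
    · rw [hω₁ i j h]; exact hrpos i j h
  have hω₁₂ : ∀ i j, ω₁ i j ≤ ω₂ i j := by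
    intro i j
    rcases eq_or_ne i j with rfl | h
    · rw [hω₁diag, hω₂diag]; exact hβ₁₂
    · rw [hω₁ i j h, hω₂ i j h]
  have hω₂pos : ∀ i j, 0 < ω₂ i j := fun i j => lt_of_lt_of_le (hω₁pos i j) (hω₁₂ i j)
  have hω₁sym : ∀ i j, ω₁ i j = ω₁ j i := by
    intro i j
    rcases eq_or_ne i j with rfl | h
    · rfl
    · rw [hω₁ i j h, hω₁ j i (Ne.symm h), norm_sub_rev]
  have hd₁pos : ∀ i, 0 < d₁ i := by
    intro i; rw [hd₁]
    exact Finset.sum_pos (fun j _ => hω₁pos i j) Finset.univ_nonempty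
  have hd₂pos : ∀ i, 0 < d₂ i := by
    intro i; rw [hd₂]
    exact Finset.sum_pos (fun j _ => hω₂pos i j) Finset.univ_nonempty
  have hd₁₂ : ∀ i, d₁ i ≤ d₂ i := by
    intro i; rw [hd₁ i, hd₂ i]
    exact Finset.sum_le_sum fun j _ => hω₁₂ i j
  have hs₁pos : ∀ i, 0 < Real.sqrt (d₁ i) := fun i => Real.sqrt_pos.mpr (hd₁pos i)
  have hs₂pos : ∀ i, 0 < Real.sqrt (d₂ i) := fun i => Real.sqrt_pos.mpr (hd₂pos i)
  obtain ⟨v, hv0, hveq⟩ := hlmax₂.1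
  -- u = D₂^{-1/2} v, w = D₁^{1/2} u
  set u : Fin n → ℝ := fun i => (Real.sqrt (d₂ i))⁻¹ * v i with hu
  set w : Fin n → ℝ := fun i => Real.sqrt (d₁ i) * u i with hw
  set T₁ : ℝ := ∑ i, ∑ j, ω₁ i j * (u i * u j) with hT₁
  set T₂ : ℝ := ∑ i, ∑ j, ω₂ i j * (u i * u j) with hT₂
  set S₁ : ℝ := ∑ i, d₁ i * (u i * u i) with hS₁
  set S₂ : ℝ := ∑ i, d₂ i * (u i * u i) with hS₂
  -- generic quadratic-form computation for the normalized Laplacian shape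
  have hquad : ∀ (a : Fin n → ℝ) (M : Matrix (Fin n) (Fin n) ℝ) (z : Fin n → ℝ),
      z ⬝ᵥ ((1 - Matrix.diagonal a * M * Matrix.diagonal a) *ᵥ z)
        = (∑ i, z i * z i) - ∑ i, ∑ j, M i j * ((a i * z i) * (a j * z j)) := by
    intro a M z
    have hent : ∀ i j, (Matrix.diagonal a * M * Matrix.diagonal a) i j = a i * M i j * a j := by
      intro i j
      rw [Matrix.mul_diagonal, Matrix.mul_apply]
      rw [Finset.sum_eq_single i]
      · rw [Matrix.diagonal_apply_eq]
      · intro p _ hpi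
        rw [Matrix.diagonal_apply_ne a (Ne.symm hpi), zero_mul]
      · intro h; exact absurd (Finset.mem_univ i) h
    have hcross : z ⬝ᵥ ((Matrix.diagonal a * M * Matrix.diagonal a) *ᵥ z)
        = ∑ i, ∑ j, M i j * ((a i * z i) * (a j * z j)) := by
      show ∑ i, z i * ((Matrix.diagonal a * M * Matrix.diagonal a) *ᵥ z) i = _
      refine Finset.sum_congr rfl fun i _ => ?_
      have hmv : ((Matrix.diagonal a * M * Matrix.diagonal a) *ᵥ z) i
          = ∑ j, a i * M i j * a j * z j := by
        show ∑ j, (Matrix.diagonal a * M * Matrix.diagonal a) i j * z j = _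
        exact Finset.sum_congr rfl fun j _ => by rw [hent]
      rw [hmv, Finset.mul_sum]
      exact Finset.sum_congr rfl fun j _ => by ring
    have h0 : z ⬝ᵥ z = ∑ i, z i * z i := rfl
    rw [Matrix.sub_mulVec, Matrix.one_mulVec, dotProduct_sub, h0, hcross]
  have hvi : ∀ i, v i = Real.sqrt (d₂ i) * u i := by
    intro i
    rw [hu]
    rw [mul_inv_cancel_left₀ (ne_of_gt (hs₂pos i))]
  have hvv : ∑ i, v i * v i = S₂ := by
    rw [hS₂]
    refine Finset.sum_congr rfl fun i _ => ?_
    calc v i * v i = Real.sqrt (d₂ i) * Real.sqrt (d₂ i) * (u i * u i) := by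
          rw [hvi i]; ring
      _ = d₂ i * (u i * u i) := by rw [Real.mul_self_sqrt (le_of_lt (hd₂pos i))]
  -- eigen-equation identity: lmax₂ * S₂ = S₂ - T₂
  have heig : lmax₂ * S₂ = S₂ - T₂ := by
    have h1 : v ⬝ᵥ (Λ₂ *ᵥ v) = lmax₂ * S₂ := by
      rw [hveq, dotProduct_smul, smul_eq_mul, ← hvv]
      rfl
    have h2 : v ⬝ᵥ (Λ₂ *ᵥ v) = S₂ - T₂ := by
      rw [hΛ₂, hquad, hvv, hT₂]
      exact congrArg _ (Finset.sum_congr rfl fun i _ => Finset.sum_congr rfl fun j _ => rfl)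
    rw [← h1, h2]
  -- the quadratic form does not depend on β: S₂ - T₂ = S₁ - T₁
  have hdiff : S₂ - T₂ = S₁ - T₁ := by
    have hds : ∀ i, d₂ i - d₁ i = β₂ - β₁ := by
      intro i
      rw [hd₁ i, hd₂ i, ← Finset.sum_sub_distrib, Finset.sum_eq_single i]
      · rw [hω₂diag, hω₁diag]
      · intro p _ hpi
        rw [hω₂ i p (Ne.symm hpi), hω₁ i p (Ne.symm hpi), sub_self]
      · intro h; exact absurd (Finset.mem_univ i) h
    have hS : S₂ - S₁ = ∑ i, (β₂ - β₁) * (u i * u i) := by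
      rw [hS₁, hS₂, ← Finset.sum_sub_distrib]
      exact Finset.sum_congr rfl fun i _ => by rw [← sub_mul, hds]
    have hT : T₂ - T₁ = ∑ i, (β₂ - β₁) * (u i * u i) := by
      rw [hT₁, hT₂, ← Finset.sum_sub_distrib]
      refine Finset.sum_congr rfl fun i _ => ?_
      rw [← Finset.sum_sub_distrib, Finset.sum_eq_single i]
      · rw [hω₂diag, hω₁diag, ← sub_mul]
      · intro p _ hpi
        rw [hω₂ i p (Ne.symm hpi), hω₁ i p (Ne.symm hpi), sub_self]
      · intro h; exact absurd (Finset.mem_univ i) h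
    linarith
  -- nonnegativity of the quadratic form
  have hQnn : 0 ≤ S₁ - T₁ := by
    have h1 : ∑ i, ∑ j, ω₁ i j * (u i * u i) = S₁ := by
      rw [hS₁]
      refine Finset.sum_congr rfl fun i _ => ?_
      rw [hd₁ i, Finset.sum_mul]
    have h2 : ∑ i, ∑ j, ω₁ i j * (u j * u j) = S₁ := by
      rw [Finset.sum_comm, hS₁]
      refine Finset.sum_congr rfl fun j _ => ?_
      rw [hd₁ j, Finset.sum_mul]
      exact Finset.sum_congr rfl fun i _ => by rw [hω₁sym]
    have hexp : ∑ i, ∑ j, ω₁ i j * (u i - u j) ^ 2 = S₁ + S₁ - 2 * T₁ := by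
      have e : ∑ i, ∑ j, ω₁ i j * (u i - u j) ^ 2
          = ∑ i, ∑ j, (ω₁ i j * (u i * u i) + ω₁ i j * (u j * u j)
              - 2 * (ω₁ i j * (u i * u j))) :=
        Finset.sum_congr rfl fun i _ => Finset.sum_congr rfl fun j _ => by ring
      rw [e]
      simp only [Finset.sum_sub_distrib, Finset.sum_add_distrib, ← Finset.mul_sum]
      rw [h1, h2, ← hT₁]
    have hnn : 0 ≤ ∑ i, ∑ j, ω₁ i j * (u i - u j) ^ 2 := by
      refine Finset.sum_nonneg fun i _ => Finset.sum_nonneg fun j _ => ?_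
      exact mul_nonneg (le_of_lt (hω₁pos i j)) (sq_nonneg _)
    linarith
  -- Λ₁ is symmetric
  have hΛ₁H : Λ₁.IsHermitian := by
    have hMT : (Matrix.of ω₁)ᵀ = Matrix.of ω₁ := by
      ext i j
      exact hω₁sym j i
    show Λ₁ᴴ = Λ₁
    rw [Matrix.conjTranspose_eq_transpose_of_trivial, hΛ₁]
    rw [Matrix.transpose_sub, Matrix.transpose_one, Matrix.transpose_mul, Matrix.transpose_mul,
      Matrix.diagonal_transpose, hMT]
    rw [mul_assoc]
  -- every eigenvalue of Λ₁ is at most lmax₁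
  have heigle : ∀ i, hΛ₁H.eigenvalues i ≤ lmax₁ := by
    intro i
    apply hlmax₁.2
    refine ⟨⇑(hΛ₁H.eigenvectorBasis i), ?_, hΛ₁H.mulVec_eigenvectorBasis i⟩
    intro h
    have hb : hΛ₁H.eigenvectorBasis i ≠ 0 := hΛ₁H.eigenvectorBasis.orthonormal.ne_zero i
    apply hb
    ext j
    exact congrFun h j
  -- Rayleigh bound at w
  have hwu : ∀ i, (Real.sqrt (d₁ i))⁻¹ * w i = u i := by
    intro i
    rw [hw]
    rw [inv_mul_cancel_left₀ (ne_of_gt (hs₁pos i))]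
  have hww : ∑ i, w i * w i = S₁ := by
    rw [hS₁]
    refine Finset.sum_congr rfl fun i _ => ?_
    rw [hw]
    calc Real.sqrt (d₁ i) * u i * (Real.sqrt (d₁ i) * u i)
        = Real.sqrt (d₁ i) * Real.sqrt (d₁ i) * (u i * u i) := by ring
      _ = d₁ i * (u i * u i) := by rw [Real.mul_self_sqrt (le_of_lt (hd₁pos i))]
  have hray : S₁ - T₁ ≤ lmax₁ * S₁ := by
    have h1 : w ⬝ᵥ (Λ₁ *ᵥ w) = S₁ - T₁ := by
      rw [hΛ₁, hquad, hww, hT₁]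
      refine congrArg _ (Finset.sum_congr rfl fun i _ => Finset.sum_congr rfl fun j _ => ?_)
      rw [Matrix.of_apply, hwu, hwu]
    have h2 : w ⬝ᵥ w = S₁ := by rw [← hww]; rfl
    have := rayleigh_dotProduct_le hΛ₁H heigle w
    rw [h1, h2] at this
    exact this
  -- positivity of S₁
  have hS₁pos : 0 < S₁ := by
    obtain ⟨i, hvi0⟩ := Function.ne_iff.mp hv0
    have hui : u i ≠ 0 := by
      rw [hu]
      exact mul_ne_zero (inv_ne_zero (ne_of_gt (hs₂pos i))) hvi0
    rw [hS₁]
    refine Finset.sum_pos' (fun j _ => mul_nonneg (le_of_lt (hd₁pos j)) (mul_self_nonneg _))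
      ⟨i, Finset.mem_univ i, ?_⟩
    exact mul_pos (hd₁pos i) (mul_self_pos.mpr hui)
  have hS₁₂ : S₁ ≤ S₂ := by
    rw [hS₁, hS₂]
    exact Finset.sum_le_sum fun i _ => mul_le_mul_of_nonneg_right (hd₁₂ i) (mul_self_nonneg _)
  have hS₂pos : 0 < S₂ := lt_of_lt_of_le hS₁pos hS₁₂
  have hl₁nn : 0 ≤ lmax₁ := by
    by_contra h
    push_neg at h
    nlinarith
  have hfinal : lmax₂ * S₂ ≤ lmax₁ * S₂ :=
    calc lmax₂ * S₂ = S₁ - T₁ := by rw [heig, hdiff]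
      _ ≤ lmax₁ * S₁ := hray
      _ ≤ lmax₁ * S₂ := mul_le_mul_of_nonneg_left hS₁₂ hl₁nn
  exact le_of_mul_le_mul_right hfinal hS₂pos
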